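/- Let p ∈ C⁰(closure Ω) with min p > 1, δ ≥ 0, and for x, y ∈ closure Ω and a ∈ ℝ^d set F(x,a) = (δ+|a|)^{(p(x)-2)/2} a. Then there exists s > 1 (which can be chosen close to 1 when |x−y| is small) and a constant C depending only on p⁻ = min p, p⁺ = max p, δ, and s such that for all x, y ∈ closure Ω and a ∈ ℝ^d: |F(x,a) − F(y,a)|² ≤ C·|p(x) − p(y)|²·(1 + |a|^{p(x)·s}). -/

import Mathlib

open Real

-- derivative of r ↦ t ^ r
lemma myHasDerivAt {t : ℝ} (ht : 0 < t) (r : ℝ) :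
    HasDerivAt (fun x : ℝ => t ^ x) (t ^ r * Real.log t) r := by
  have h := (hasDerivAt_const r t).rpow (hasDerivAt_id r) ht
  simpa using h

-- MVT-type bound
lemma myA {t : ℝ} (ht : 0 < t) {α β : ℝ} (h : α ≤ β) :
    |t ^ α - t ^ β| ≤ (β - α) * |Real.log t| * (t ^ α + t ^ β) := by
  rcases eq_or_lt_of_le h with rfl | hlt
  · simp
  · obtain ⟨c, hc, hc'⟩ := exists_hasDerivAt_eq_slope (fun r : ℝ => t ^ r)
      (fun r => t ^ r * Real.log t) hlt
      (fun r _ => (myHasDerivAt ht r).continuousAt.continuousWithinAt)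
      (fun r _ => myHasDerivAt ht r)
    have hβα : (0:ℝ) < β - α := by linarith
    have heq : t ^ β - t ^ α = t ^ c * Real.log t * (β - α) := by
      field_simp at hc'; linarith [hc']
    have habs : |t ^ α - t ^ β| = t ^ c * |Real.log t| * (β - α) := by
      rw [abs_sub_comm, heq, abs_mul, abs_mul, abs_of_nonneg (le_of_lt (rpow_pos_of_pos ht c)),
        abs_of_pos hβα]
    rw [habs]
    have hcb : t ^ c ≤ t ^ α + t ^ β := by
      rcases le_total t 1 with h1 | h1
      · have : t ^ c ≤ t ^ α := Real.rpow_le_rpow_of_exponent_ge ht h1 hc.1.le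
        nlinarith [rpow_pos_of_pos ht β]
      · have : t ^ c ≤ t ^ β := Real.rpow_le_rpow_of_exponent_le h1 hc.2.le
        nlinarith [rpow_pos_of_pos ht α]
    calc t ^ c * |Real.log t| * (β - α) ≤ (t ^ α + t ^ β) * |Real.log t| * (β - α) := by
          exact mul_le_mul_of_nonneg_right (mul_le_mul_of_nonneg_right hcb (abs_nonneg _)) hβα.le
      _ = (β - α) * |Real.log t| * (t ^ α + t ^ β) := by ring

-- log absorption
lemma myB {t γ g0 g1 : ℝ} (ht : 0 < t) (hg0 : 0 < g0) (h1 : g0 ≤ γ) (h2 : γ ≤ g1) :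
    |Real.log t| * t ^ γ ≤ (1 / g0 + 2) * (1 + t ^ (g1 + 1/2)) := by
  have hpos : (0:ℝ) ≤ 1 + t ^ (g1 + 1/2) := by positivity
  rcases le_total t 1 with h | h
  · have hlog : |Real.log t| = -Real.log t := abs_of_nonpos (Real.log_nonpos ht.le h)
    have hinv : -Real.log t = Real.log t⁻¹ := (Real.log_inv t).symm
    have hb : Real.log t⁻¹ ≤ (t⁻¹) ^ g0 / g0 := Real.log_le_rpow_div (by positivity) hg0
    have htγ : t ^ γ ≤ t ^ g0 := Real.rpow_le_rpow_of_exponent_ge ht h h1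
    have hprod : |Real.log t| * t ^ γ ≤ ((t⁻¹) ^ g0 / g0) * t ^ g0 := by
      rw [hlog, hinv]
      apply mul_le_mul hb htγ (by positivity)
      positivity
    have hkey : ((t⁻¹) ^ g0 / g0) * t ^ g0 = 1 / g0 := by
      rw [Real.inv_rpow ht.le]
      field_simp
    rw [hkey] at hprod
    calc |Real.log t| * t ^ γ ≤ 1 / g0 := hprod
      _ ≤ (1 / g0 + 2) * 1 := by rw [mul_one]; linarith
      _ ≤ (1 / g0 + 2) * (1 + t ^ (g1 + 1/2)) := by
          apply mul_le_mul_of_nonneg_left _ (by positivity)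
          nlinarith [rpow_pos_of_pos ht (g1 + 1/2)]
  · have hlog : |Real.log t| = Real.log t := abs_of_nonneg (Real.log_nonneg h)
    have hb : Real.log t ≤ t ^ (1/2 : ℝ) / (1/2) := Real.log_le_rpow_div ht.le (by norm_num)
    have htγ : t ^ γ ≤ t ^ g1 := Real.rpow_le_rpow_of_exponent_le h h2
    have hprod : |Real.log t| * t ^ γ ≤ (t ^ (1/2:ℝ) / (1/2)) * t ^ g1 := by
      rw [hlog]
      apply mul_le_mul hb htγ (by positivity)
      positivity
    have hkey : (t ^ (1/2:ℝ) / (1/2)) * t ^ g1 = 2 * t ^ (g1 + 1/2) := by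
      rw [Real.rpow_add ht]; ring
    rw [hkey] at hprod
    calc |Real.log t| * t ^ γ ≤ 2 * t ^ (g1 + 1/2) := hprod
      _ ≤ (1 / g0 + 2) * (1 + t ^ (g1 + 1/2)) := by
          have h1g : 0 < 1 / g0 := by positivity
          nlinarith [rpow_pos_of_pos ht (g1 + 1/2)]

-- absorbing δ
lemma myC {δ u e E : ℝ} (hδ : 0 ≤ δ) (hu : 0 ≤ u) (he : 0 ≤ e) (hE : e ≤ E) :
    (δ + u) ^ e ≤ (2 * (1 + δ)) ^ E * (1 + u ^ e) := by
  have h1 : δ + u ≤ (1 + δ) * (1 + u) := by nlinarith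
  have h2 : (δ + u) ^ e ≤ ((1 + δ) * (1 + u)) ^ e :=
    Real.rpow_le_rpow (by linarith) h1 he
  have h3 : ((1 + δ) * (1 + u)) ^ e = (1 + δ) ^ e * (1 + u) ^ e :=
    Real.mul_rpow (by linarith) (by linarith)
  have h4 : (1 + δ) ^ e ≤ (1 + δ) ^ E := Real.rpow_le_rpow_of_exponent_le (by linarith) hE
  have h5 : (1 + u) ^ e ≤ 2 ^ e * (1 + u ^ e) := by
    rcases le_total u 1 with h | h
    · have : (1 + u) ^ e ≤ 2 ^ e := Real.rpow_le_rpow (by linarith) (by linarith) he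
      nlinarith [Real.rpow_pos_of_pos (show (0:ℝ)<2 by norm_num) e,
        Real.rpow_nonneg hu e]
    · have hu2 : (1 + u) ≤ 2 * u := by linarith
      have : (1 + u) ^ e ≤ (2 * u) ^ e := Real.rpow_le_rpow (by linarith) hu2 he
      rw [Real.mul_rpow (by norm_num) hu] at this
      nlinarith [Real.rpow_pos_of_pos (show (0:ℝ)<2 by norm_num) e,
        Real.rpow_nonneg hu e]
  have h6 : 2 ^ e ≤ (2:ℝ) ^ E := Real.rpow_le_rpow_of_exponent_le (by norm_num) hE
  have h7 : (2 * (1 + δ)) ^ E = 2 ^ E * (1 + δ) ^ E :=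
    Real.mul_rpow (by norm_num) (by linarith)
  calc (δ + u) ^ e ≤ (1 + δ) ^ e * (1 + u) ^ e := by rw [← h3]; exact h2
    _ ≤ (1 + δ) ^ E * (2 ^ e * (1 + u ^ e)) := by
        apply mul_le_mul h4 h5 (by positivity) (by positivity)
    _ ≤ (1 + δ) ^ E * (2 ^ E * (1 + u ^ e)) := by
        apply mul_le_mul_of_nonneg_left _ (by positivity)
        apply mul_le_mul_of_nonneg_right h6 (by positivity)
    _ = (2 * (1 + δ)) ^ E * (1 + u ^ e) := by rw [h7]; ring

set_option maxHeartbeats 1000000 in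
theorem stmt11 {d : ℕ} (Ω : Set (EuclideanSpace ℝ (Fin d)))
    (hΩ : Bornology.IsBounded Ω)
    (p : EuclideanSpace ℝ (Fin d) → ℝ) (hp : ContinuousOn p (closure Ω))
    (hp1 : ∀ x ∈ closure Ω, 1 < p x) (δ : ℝ) (hδ : 0 ≤ δ) :
    ∃ s > (1:ℝ), ∃ C > (0:ℝ), ∀ x ∈ closure Ω, ∀ y ∈ closure Ω,
      ∀ a : EuclideanSpace ℝ (Fin d),
        ‖(δ + ‖a‖) ^ ((p x - 2) / 2) • a - (δ + ‖a‖) ^ ((p y - 2) / 2) • a‖ ^ 2 ≤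
          C * |p x - p y| ^ 2 * (1 + ‖a‖ ^ (p x * s)) := by
  by_cases hne : (closure Ω).Nonempty
  swap
  · exact ⟨2, one_lt_two, 1, one_pos, fun x hx => absurd ⟨x, hx⟩ hne⟩
  have hKc : IsCompact (closure Ω) := hΩ.isCompact_closure
  obtain ⟨xm, hxm, hmin⟩ := hKc.exists_isMinOn hne hp
  obtain ⟨xM, hxM, hmax⟩ := hKc.exists_isMaxOn hne hp
  have hm1 : 1 < p xm := hp1 xm hxm
  have hmM : p xm ≤ p xM := hmin hxM
  set m := p xm with hm
  set M := p xM with hM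
  set s : ℝ := (M + 1) / m with hsdef
  have hm0 : (0:ℝ) < m := by linarith
  have hms : m * s = M + 1 := by rw [hsdef]; field_simp
  have hs1 : 1 < s := by rw [hsdef, lt_div_iff₀ hm0]; linarith
  have hs0 : (0:ℝ) < s := by linarith
  set K : ℝ := (2 * (1 + δ)) ^ (M * s / 2) with hKdef
  have hK0 : 0 < K := Real.rpow_pos_of_pos (by linarith) _
  set C2 : ℝ := 1 / (m / 2) + 2 with hC2def
  have hC20 : 0 < C2 := by rw [hC2def]; positivity
  set C' : ℝ := C2 * (2 + K) with hC'def
  have hC'0 : 0 < C' := by rw [hC'def]; positivity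
  refine ⟨s, hs1, 2 * C' ^ 2, by positivity, ?_⟩
  intro x hx y hy a
  by_cases ha : a = 0
  · subst ha
    simp only [smul_zero, sub_zero, norm_zero]
    have : (0:ℝ) ≤ 2 * C' ^ 2 * |p x - p y| ^ 2 * (1 + ‖(0:EuclideanSpace ℝ (Fin d))‖ ^ (p x * s)) := by
      have h0 : (0:ℝ) ≤ ‖(0:EuclideanSpace ℝ (Fin d))‖ ^ (p x * s) :=
        Real.rpow_nonneg (norm_nonneg _) _
      positivity
    simpa using this
  · have hu : 0 < ‖a‖ := norm_pos_iff.mpr ha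
    set u := ‖a‖ with hudef
    set t := δ + u with htdef
    have ht : 0 < t := by rw [htdef]; linarith
    have hut : u ≤ t := by rw [htdef]; linarith
    set α := (p x - 2) / 2 with hαdef
    set β := (p y - 2) / 2 with hβdef
    have hpx : m ≤ p x := hmin hx
    have hpxM : p x ≤ M := hmax hx
    have hpy : m ≤ p y := hmin hy
    have hpyM : p y ≤ M := hmax hy
    have hL : ‖t ^ α • a - t ^ β • a‖ = |t ^ α - t ^ β| * u := by
      rw [← sub_smul, norm_smul, Real.norm_eq_abs]
    rw [hL]
    set e : ℝ := p x * s / 2 with hedef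
    have hpx1 : 1 < p x := hp1 x hx
    have he0 : 0 < e := by
      rw [hedef]
      have := mul_pos (show (0:ℝ) < p x by linarith) hs0
      linarith
    -- symmetric MVT bound
    have hA : |t ^ α - t ^ β| ≤ |α - β| * |Real.log t| * (t ^ α + t ^ β) := by
      rcases le_total α β with h | h
      · rw [abs_sub_comm α β, abs_of_nonneg (show (0:ℝ) ≤ β - α by linarith)]
        exact myA ht h
      · rw [abs_sub_comm (t ^ α), abs_of_nonneg (show (0:ℝ) ≤ α - β by linarith),
          add_comm (t ^ α)]
        exact myA ht h
    have hαβ : |α - β| = |p x - p y| / 2 := by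
      rw [hαdef, hβdef, show (p x - 2) / 2 - (p y - 2) / 2 = (p x - p y) / 2 by ring,
        abs_div, abs_two]
    -- multiply by u
    have h2 : (t ^ α + t ^ β) * u ≤ t ^ (α + 1) + t ^ (β + 1) := by
      rw [Real.rpow_add ht, Real.rpow_add ht, Real.rpow_one, add_mul]
      exact add_le_add
        (mul_le_mul_of_nonneg_left hut (Real.rpow_pos_of_pos ht α).le)
        (mul_le_mul_of_nonneg_left hut (Real.rpow_pos_of_pos ht β).le)
    -- log absorption
    have hα1 : α + 1 = p x / 2 := by rw [hαdef]; ring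
    have hβ1 : β + 1 = p y / 2 := by rw [hβdef]; ring
    have hB1 : |Real.log t| * t ^ (α + 1) ≤ C2 * (1 + t ^ (M / 2 + 1 / 2)) := by
      rw [hC2def]
      exact myB ht (by positivity) (by rw [hα1]; linarith) (by rw [hα1]; linarith)
    have hB2 : |Real.log t| * t ^ (β + 1) ≤ C2 * (1 + t ^ (M / 2 + 1 / 2)) := by
      rw [hC2def]
      exact myB ht (by positivity) (by rw [hβ1]; linarith) (by rw [hβ1]; linarith)
    -- exponent comparison
    have hexp : M / 2 + 1 / 2 ≤ e := by
      rw [hedef]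
      have : m * s ≤ p x * s := mul_le_mul_of_nonneg_right hpx hs0.le
      linarith [hms]
    have h3 : t ^ (M / 2 + 1 / 2) ≤ 1 + t ^ e := by
      rcases le_total t 1 with h | h
      · have h31 : t ^ (M / 2 + 1 / 2) ≤ 1 := Real.rpow_le_one ht.le h (by linarith)
        linarith [Real.rpow_nonneg ht.le e]
      · have h32 : t ^ (M / 2 + 1 / 2) ≤ t ^ e := Real.rpow_le_rpow_of_exponent_le h hexp
        linarith
    have h4 : t ^ e ≤ K * (1 + u ^ e) := by
      rw [hKdef, htdef]
      exact myC hδ hu.le he0.le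
        (by rw [hedef]
            have : p x * s ≤ M * s := mul_le_mul_of_nonneg_right hpxM hs0.le
            linarith)
    have hue : 0 ≤ u ^ e := Real.rpow_nonneg hu.le _
    have h5 : 1 + t ^ (M / 2 + 1 / 2) ≤ (2 + K) * (1 + u ^ e) := by
      have h51 : 1 + t ^ (M / 2 + 1 / 2) ≤ 2 + K * (1 + u ^ e) := by linarith
      have h52 : 2 + K * (1 + u ^ e) ≤ (2 + K) * (1 + u ^ e) := by nlinarith [hue]
      linarith
    -- main chain
    have key : |t ^ α - t ^ β| * u ≤ C' * |p x - p y| * (1 + u ^ e) := by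
      have c1 : |t ^ α - t ^ β| * u ≤ |α - β| * |Real.log t| * (t ^ α + t ^ β) * u :=
        mul_le_mul_of_nonneg_right hA hu.le
      have c2 : |α - β| * |Real.log t| * (t ^ α + t ^ β) * u
          ≤ |α - β| * (|Real.log t| * t ^ (α + 1) + |Real.log t| * t ^ (β + 1)) := by
        have hlt : |Real.log t| * ((t ^ α + t ^ β) * u) ≤ |Real.log t| * (t ^ (α+1) + t ^ (β+1)) :=
          mul_le_mul_of_nonneg_left h2 (abs_nonneg _)
        calc |α - β| * |Real.log t| * (t ^ α + t ^ β) * u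
            = |α - β| * (|Real.log t| * ((t ^ α + t ^ β) * u)) := by ring
          _ ≤ |α - β| * (|Real.log t| * (t ^ (α+1) + t ^ (β+1))) :=
              mul_le_mul_of_nonneg_left hlt (abs_nonneg _)
          _ = |α - β| * (|Real.log t| * t ^ (α + 1) + |Real.log t| * t ^ (β + 1)) := by ring
      have c3 : |Real.log t| * t ^ (α + 1) + |Real.log t| * t ^ (β + 1)
          ≤ 2 * C2 * (1 + t ^ (M / 2 + 1 / 2)) := by linarith
      have c4 : 2 * C2 * (1 + t ^ (M / 2 + 1 / 2)) ≤ 2 * C2 * ((2 + K) * (1 + u ^ e)) :=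
        mul_le_mul_of_nonneg_left h5 (by positivity)
      have c5 : |α - β| * (2 * C2 * ((2 + K) * (1 + u ^ e)))
          = C' * |p x - p y| * (1 + u ^ e) := by
        rw [hαβ, hC'def]; ring
      calc |t ^ α - t ^ β| * u
          ≤ |α - β| * (|Real.log t| * t ^ (α + 1) + |Real.log t| * t ^ (β + 1)) := c1.trans c2
        _ ≤ |α - β| * (2 * C2 * ((2 + K) * (1 + u ^ e))) :=
            mul_le_mul_of_nonneg_left (c3.trans c4) (abs_nonneg _)
        _ = C' * |p x - p y| * (1 + u ^ e) := c5
    -- square it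
    have hkey2 : (|t ^ α - t ^ β| * u) ^ 2 ≤ (C' * |p x - p y| * (1 + u ^ e)) ^ 2 :=
      pow_le_pow_left₀ (by positivity) key 2
    have husq : (u ^ e) ^ 2 = u ^ (p x * s) := by
      rw [← Real.rpow_natCast (u ^ e) 2, ← Real.rpow_mul hu.le]
      congr 1
      rw [hedef]; push_cast; ring
    have hfin : (C' * |p x - p y| * (1 + u ^ e)) ^ 2
        ≤ 2 * C' ^ 2 * |p x - p y| ^ 2 * (1 + u ^ (p x * s)) := by
      have hv : 2 * (u ^ e) ≤ 1 + (u ^ e) ^ 2 := by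
        have h := two_mul_le_add_sq 1 (u ^ e)
        linarith [h]
      have hsq : (1 + u ^ e) ^ 2 ≤ 2 * (1 + u ^ (p x * s)) := by
        rw [← husq]
        linarith [hv]
      calc (C' * |p x - p y| * (1 + u ^ e)) ^ 2
          = C' ^ 2 * |p x - p y| ^ 2 * (1 + u ^ e) ^ 2 := by ring
        _ ≤ C' ^ 2 * |p x - p y| ^ 2 * (2 * (1 + u ^ (p x * s))) := by
            apply mul_le_mul_of_nonneg_left hsq (by positivity)
        _ = 2 * C' ^ 2 * |p x - p y| ^ 2 * (1 + u ^ (p x * s)) := by ring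
    exact hkey2.trans hfin
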